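/- Let I ⊆ 𝔽[x₁,…,x_d] be an ideal with dim_𝔽(𝔽[x]/I) = n, let U_n^d = {u + e_i : u ∈ V_n^d, 0 ≤ i ≤ d} (with e₀ = 0), let S_U = lin{x^u : u ∈ U_n^d}, and let I_U = I ∩ S_U. Then dim_𝔽(I_U) = |U_n^d| − n. -/

import Mathlib

open MvPolynomial

/-- Membership in `V_n^d = {v ∈ ℕ^d : ∏ (v_i+1) ≤ n}`, the union of all `n`-staircases. -/
def memV {d : ℕ} (n : ℕ) (v : Fin d →₀ ℕ) : Prop := ∏ i, (v i + 1) ≤ n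

/-- Membership in `U_n^d = {v + e_i : v ∈ V_n^d, 0 ≤ i ≤ d}` (with `e₀ = 0`). -/
def memU {d : ℕ} (n : ℕ) (u : Fin d →₀ ℕ) : Prop :=
  ∃ v : Fin d →₀ ℕ, memV n v ∧ (u = v ∨ ∃ i : Fin d, u = v + Finsupp.single i 1)

/-- A family of vectors each of which lies outside the span of the earlier ones
(with respect to a linear order on the index type) is linearly independent. -/
theorem linearIndependent_of_not_mem_span_lt {F : Type*} [Field F] {Q : Type*}
    [AddCommGroup Q] [Module F Q] {ι : Type*} [LinearOrder ι] {f : ι → Q}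
    (h : ∀ i, f i ∉ Submodule.span F (f '' {j | j < i})) : LinearIndependent F f := by
  rw [linearIndependent_iff']
  intro s
  induction s using Finset.strongInduction with
  | _ s ih =>
    intro g hg i hi
    have hne : s.Nonempty := ⟨i, hi⟩
    have hms := s.max'_mem hne
    set m := s.max' hne with hm
    have hgm : g m = 0 := by
      by_contra hc
      apply h m
      have hsum : g m • f m + ∑ j ∈ s.erase m, g j • f j = 0 :=
        (Finset.add_sum_erase s (fun j => g j • f j) hms).trans hg
      have heq : f m = (g m)⁻¹ • (-∑ j ∈ s.erase m, g j • f j) := by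
        have : g m • f m = -∑ j ∈ s.erase m, g j • f j := by linear_combination (norm := module) hsum
        rw [← this, smul_smul, inv_mul_cancel₀ hc, one_smul]
      rw [heq]
      refine Submodule.smul_mem _ _ (Submodule.neg_mem _ (Submodule.sum_mem _ ?_))
      intro j hj
      refine Submodule.smul_mem _ _ (Submodule.subset_span ?_)
      exact ⟨j, lt_of_le_of_ne (s.le_max' j (Finset.mem_of_mem_erase hj))
        (Finset.ne_of_mem_erase hj), rfl⟩
    have hg' : ∑ j ∈ s.erase m, g j • f j = 0 := by
      have hsum : g m • f m + ∑ j ∈ s.erase m, g j • f j = 0 :=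
        (Finset.add_sum_erase s (fun j => g j • f j) hms).trans hg
      rw [hgm, zero_smul, zero_add] at hsum; exact hsum
    by_cases him : i = m
    · rw [him]; exact hgm
    · exact ih (s.erase m) (Finset.erase_ssubset hms) g hg' i (Finset.mem_erase.2 ⟨him, hi⟩)

set_option maxHeartbeats 1000000 in
set_option synthInstance.maxHeartbeats 400000 in
/-- Let `I` be an ideal of colength `n` in `F[x₁,…,x_d]`, let `U` be the finite set
`U_n^d`, let `S_U` be the span of the monomials with exponent in `U`, and let
`I_U = I ∩ S_U`. Then `dim_F(I_U) = |U_n^d| − n`. -/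
theorem dim_I_inter_SU {d n : ℕ} {F : Type*} [Field F]
    (I : Ideal (MvPolynomial (Fin d) F))
    (hlen : Module.finrank F (MvPolynomial (Fin d) F ⧸ I) = n)
    (U : Finset (Fin d →₀ ℕ)) (hU : ∀ u, u ∈ U ↔ memU n u) :
    Module.finrank F
      ↥(Submodule.restrictScalars F I ⊓
        Submodule.span F {p | ∃ u ∈ U, p = monomial u (1 : F)}) = U.card - n := by
  classical
  rcases Nat.eq_zero_or_pos n with hn | hn
  · -- degenerate case: `n = 0` forces `U = ∅`.
    subst hn
    have hUe : U = ∅ := by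
      rw [Finset.eq_empty_iff_forall_notMem]
      intro u hu
      obtain ⟨v, hv, -⟩ := (hU u).mp hu
      have : 0 < ∏ i, (v i + 1) := Finset.prod_pos fun i _ => Nat.succ_pos _
      exact absurd (lt_of_lt_of_le this hv) (lt_irrefl 0)
    have hset : {p : MvPolynomial (Fin d) F | ∃ u ∈ U, p = monomial u (1 : F)} = ∅ := by
      rw [Set.eq_empty_iff_forall_notMem]
      rintro p ⟨u, hu, -⟩
      simp [hUe] at hu
    rw [hset, Submodule.span_empty, inf_bot_eq, hUe]
    simp
  · haveI : FiniteDimensional F (MvPolynomial (Fin d) F ⧸ I) :=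
      FiniteDimensional.of_finrank_pos (by omega)
    set π : MvPolynomial (Fin d) F →ₗ[F] (MvPolynomial (Fin d) F ⧸ I) :=
      (Ideal.Quotient.mkₐ F I).toLinearMap with hπ
    set q : (Fin d →₀ ℕ) → (MvPolynomial (Fin d) F ⧸ I) := fun v => π (monomial v 1) with hqdef
    set Λ : Set (Fin d →₀ ℕ) :=
      {v | q v ∉ Submodule.span F (q '' {w | toLex w < toLex v})} with hΛ
    -- multiplicativity helper
    have hqmul : ∀ (c w : Fin d →₀ ℕ),
        (Ideal.Quotient.mkₐ F I) (monomial c (1 : F)) * q w = q (w + c) := by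
      intro c w
      show (Ideal.Quotient.mkₐ F I) (monomial c 1) * (Ideal.Quotient.mkₐ F I) (monomial w 1) = _
      rw [← map_mul, monomial_mul, one_mul, add_comm]
      rfl
    -- Λ is downward closed
    have hdc : ∀ v ∈ Λ, ∀ u, u ≤ v → u ∈ Λ := by
      intro v hv u huv
      by_contra hu
      rw [hΛ, Set.mem_setOf_eq, not_not] at hu
      apply hv
      obtain ⟨c, rfl⟩ : ∃ c, v = u + c := ⟨v - u, (add_tsub_cancel_of_le huv).symm⟩
      show q (u + c) ∈ Submodule.span F (q '' {w | toLex w < toLex (u + c)})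
      set L := LinearMap.mulLeft F ((Ideal.Quotient.mkₐ F I) (monomial c (1 : F))) with hL
      have h2 : L (q u) ∈
          Submodule.map L (Submodule.span F (q '' {w | toLex w < toLex u})) :=
        Submodule.mem_map_of_mem hu
      rw [Submodule.map_span] at h2
      have himg : L '' (q '' {w | toLex w < toLex u}) ⊆
          q '' {w | toLex w < toLex (u + c)} := by
        rintro x ⟨y, ⟨w, hw, rfl⟩, rfl⟩
        refine ⟨w + c, ?_, (hqmul c w).symm⟩
        show toLex w + toLex c < toLex u + toLex c
        exact add_lt_add_left hw (toLex c)
      have : L (q u) = q (u + c) := hqmul c u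
      rw [this] at h2
      exact Submodule.span_mono himg h2
    -- every monomial class is in the span of the Λ-monomial classes
    have hspan : ∀ u : Fin d →₀ ℕ, q u ∈ Submodule.span F (q '' Λ) := by
      have key : ∀ u : Lex (Fin d →₀ ℕ), q (ofLex u) ∈ Submodule.span F (q '' Λ) := by
        intro u
        induction u using WellFoundedLT.induction with
        | _ u ih =>
          by_cases hu : ofLex u ∈ Λ
          · exact Submodule.subset_span ⟨_, hu, rfl⟩
          · rw [hΛ, Set.mem_setOf_eq, not_not] at hu
            refine Submodule.span_le.mpr ?_ hu
            rintro x ⟨w, hw, rfl⟩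
            exact ih (toLex w) hw
      exact fun u => key (toLex u)
    -- linear independence of the Λ-monomial classes
    set Λ' : Set (Lex (Fin d →₀ ℕ)) := {v | ofLex v ∈ Λ} with hΛ'
    set f := fun v : ↥Λ' => q (ofLex v.1) with hf
    have hind : LinearIndependent F f := by
      apply linearIndependent_of_not_mem_span_lt
      intro i hmem
      apply i.2
      refine Submodule.span_mono ?_ hmem
      rintro x ⟨⟨j, hj⟩, hlt, rfl⟩
      exact ⟨ofLex j, hlt, rfl⟩
    -- Λ ⊆ V
    have hΛV : ∀ v ∈ Λ, memV n v := by
      intro v hv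
      have hbox : ∀ u : {x // x ∈ Finset.Iic v}, (toLex u.1) ∈ Λ' :=
        fun u => hdc v hv u.1 (Finset.mem_Iic.mp u.2)
      set g : {x // x ∈ Finset.Iic v} → Λ' := fun u => ⟨toLex u.1, hbox u⟩ with hg
      have hginj : Function.Injective g := by
        intro a b hab
        apply Subtype.ext
        exact congrArg (fun x => ofLex x.1) hab
      have hcomp : LinearIndependent F (f ∘ g) := hind.comp g hginj
      have hle := hcomp.fintype_card_le_finrank
      rw [hlen, Fintype.card_coe] at hle
      have hcard : (Finset.Iic v).card = ∏ i, (v i + 1) := by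
        rw [Finsupp.card_Iic]
        rw [← Finset.prod_subset (Finset.subset_univ v.support)
          (fun i _ hi => by simp [Finsupp.notMem_support_iff.mp hi])]
        exact Finset.prod_congr rfl fun i _ => by rw [Nat.card_Iic]
      rwa [hcard] at hle
    -- the big space S
    set s : Set (MvPolynomial (Fin d) F) := {p | ∃ u ∈ U, p = monomial u (1 : F)} with hs
    have hsimg : s = (fun u => monomial u (1 : F)) '' (U : Set (Fin d →₀ ℕ)) := by
      ext p
      constructor
      · rintro ⟨u, hu, rfl⟩; exact ⟨u, hu, rfl⟩
      · rintro ⟨u, hu, rfl⟩; exact ⟨u, hu, rfl⟩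
    set S : Submodule F (MvPolynomial (Fin d) F) := Submodule.span F s with hS
    have hsfin : s.Finite := by rw [hsimg]; exact (U.finite_toSet).image _
    haveI : FiniteDimensional F S := FiniteDimensional.span_of_finite F hsfin
    -- finrank S = U.card
    have hmono_ind : LinearIndependent F (fun u : (U : Set (Fin d →₀ ℕ)) => monomial u.1 (1 : F)) := by
      have := (basisMonomials (Fin d) F).linearIndependent
      rw [coe_basisMonomials] at this
      exact this.comp _ Subtype.val_injective
    have hrange : Set.range (fun u : (U : Set (Fin d →₀ ℕ)) => monomial u.1 (1 : F)) = s :=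
      (hsimg.trans (Set.image_eq_range _ _)).symm
    have hfinS : Module.finrank F S = U.card := by
      have := finrank_span_eq_card (R := F) hmono_ind
      rw [hrange] at this
      rw [hS, this]
      simp [Fintype.card_coe]
    -- the restricted map
    set φ := π.domRestrict S with hφ
    have hkerπ : LinearMap.ker π = Submodule.restrictScalars F I := by
      ext x
      simp only [hπ, LinearMap.mem_ker, AlgHom.toLinearMap_apply, Ideal.Quotient.mkₐ_eq_mk,
        Submodule.restrictScalars_mem]
      exact Ideal.Quotient.eq_zero_iff_mem
    have hker : LinearMap.ker φ = Submodule.comap S.subtype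
        (Submodule.restrictScalars F I ⊓ S) := by
      rw [hφ, LinearMap.ker_domRestrict, hkerπ]
      ext x
      simp [Submodule.mem_comap, x.2]
    have hsurj : LinearMap.range φ = ⊤ := by
      rw [hφ, LinearMap.range_domRestrict]
      rw [eq_top_iff]
      have hmapS : Submodule.map π S = Submodule.span F (π '' s) := by
        rw [hS, Submodule.map_span]
      rw [hmapS]
      have htop : Submodule.span F (Set.range q) = ⊤ := by
        have h1 : Submodule.map π ⊤ = ⊤ := by
          rw [Submodule.map_top, LinearMap.range_eq_top]
          exact Ideal.Quotient.mkₐ_surjective F I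
        have h2 : (⊤ : Submodule F (MvPolynomial (Fin d) F)) =
            Submodule.span F (Set.range fun u : Fin d →₀ ℕ => monomial u (1 : F)) := by
          rw [← (basisMonomials (Fin d) F).span_eq, coe_basisMonomials]
        rw [h2, Submodule.map_span] at h1
        rw [← h1]
        congr 1
        rw [← Set.range_comp]
        rfl
      have hstep1 : (⊤ : Submodule F (MvPolynomial (Fin d) F ⧸ I)) ≤ Submodule.span F (q '' Λ) := by
        rw [← htop]
        refine Submodule.span_le.mpr ?_
        rintro x ⟨u, rfl⟩
        exact hspan u
      refine le_trans hstep1 (Submodule.span_mono ?_)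
      rintro x ⟨v, hv, rfl⟩
      refine ⟨monomial v 1, ?_, rfl⟩
      exact ⟨v, (hU v).mpr ⟨v, hΛV v hv, Or.inl rfl⟩, rfl⟩
    -- rank-nullity
    have hrn := LinearMap.finrank_range_add_finrank_ker φ
    rw [hsurj, finrank_top, hlen, hker] at hrn
    have hequiv := Submodule.comapSubtypeEquivOfLe
      (inf_le_right : Submodule.restrictScalars F I ⊓ S ≤ S)
    rw [hequiv.finrank_eq, hfinS] at hrn
    omega
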